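/- Let G be a finite group and H a normal subgroup of G such that for any g ∈ G with g² ∈ H, there exists h ∈ H such that (gh)² = e. Then there exists an inverse-closed subset S₀ of G \ {e} such that H is a perfect code in Cay(G,S₀). -/

import Mathlib

/-- The Cayley graph of a group `G` with connection set `S`:
`x` is adjacent to `y` iff `y * x⁻¹ ∈ S` (symmetrized; for inverse-closed `S`
not containing `1` this is the usual Cayley graph). -/
def cayley {G : Type*} [Group G] (S : Set G) : SimpleGraph G :=
  SimpleGraph.fromRel (fun x y => y * x⁻¹ ∈ S)

/-- `C` is an `(a,b)`-regular set in `Γ`: every vertex in `C` has exactly `a`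
neighbors in `C`, and every vertex outside `C` has exactly `b` neighbors in `C`. -/
def IsRegularSet {V : Type*} (Γ : SimpleGraph V) (C : Set V) (a b : ℕ) : Prop :=
  (∀ v ∈ C, (Γ.neighborSet v ∩ C).ncard = a) ∧
  (∀ v ∉ C, (Γ.neighborSet v ∩ C).ncard = b)

theorem sq_out_mem {G : Type*} [Group G] {H : Subgroup G} [H.Normal] {C : G ⧸ H}
    (hC : C * C = 1) : C.out ^ 2 ∈ H := by
  rw [← QuotientGroup.eq_one_iff, sq, QuotientGroup.mk_mul, QuotientGroup.out_eq', hC]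

open scoped Classical in
noncomputable def repFun {G : Type*} [Group G] (H : Subgroup G) [H.Normal]
    (hcond : ∀ g : G, g ^ 2 ∈ H → ∃ h ∈ H, (g * h) ^ 2 = 1) : G ⧸ H → G :=
  fun C =>
    if hC : C * C = 1 then C.out * Classical.choose (hcond C.out (sq_out_mem hC))
    else if WellOrderingRel C C⁻¹ then C.out else (C⁻¹.out)⁻¹

theorem repFun_mk {G : Type*} [Group G] (H : Subgroup G) [H.Normal]
    (hcond : ∀ g : G, g ^ 2 ∈ H → ∃ h ∈ H, (g * h) ^ 2 = 1) (C : G ⧸ H) :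
    QuotientGroup.mk (s := H) (repFun H hcond C) = C := by
  classical
  unfold repFun
  split_ifs with h1 h2
  · have hmem := (Classical.choose_spec (hcond C.out (sq_out_mem h1))).1
    rw [QuotientGroup.mk_mul, (QuotientGroup.eq_one_iff _).mpr hmem, mul_one,
      QuotientGroup.out_eq']
  · exact QuotientGroup.out_eq' C
  · rw [QuotientGroup.mk_inv, QuotientGroup.out_eq', inv_inv]

theorem repFun_inv {G : Type*} [Group G] (H : Subgroup G) [H.Normal]
    (hcond : ∀ g : G, g ^ 2 ∈ H → ∃ h ∈ H, (g * h) ^ 2 = 1) (C : G ⧸ H) :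
    repFun H hcond C⁻¹ = (repFun H hcond C)⁻¹ := by
  classical
  by_cases h1 : C * C = 1
  · have hCinv : C⁻¹ = C := inv_eq_of_mul_eq_one_right h1
    rw [hCinv]
    have hsq : repFun H hcond C ^ 2 = 1 := by
      unfold repFun; rw [dif_pos h1]
      exact (Classical.choose_spec (hcond C.out (sq_out_mem h1))).2
    exact (inv_eq_of_mul_eq_one_right (by rw [← sq]; exact hsq)).symm
  · have h1' : ¬(C⁻¹ * C⁻¹ = 1) := by
      intro h; apply h1
      have := congrArg (·⁻¹) h
      simpa [mul_inv_rev] using this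
    have hne : C ≠ C⁻¹ := fun h => h1 (mul_eq_one_iff_eq_inv.mpr h)
    by_cases h2 : WellOrderingRel C C⁻¹
    · have h3 : ¬ WellOrderingRel C⁻¹ (C⁻¹)⁻¹ := by
        rw [inv_inv]; exact asymm h2
      unfold repFun
      rw [dif_neg h1, dif_neg h1', if_pos h2, if_neg h3, inv_inv]
    · have h3 : WellOrderingRel C⁻¹ C := by
        rcases trichotomous_of WellOrderingRel C C⁻¹ with h | h | h
        · exact absurd h h2
        · exact absurd h hne
        · exact h
      unfold repFun
      rw [dif_neg h1, dif_neg h1', if_neg h2, if_pos (by rwa [inv_inv]), inv_inv]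

theorem stmt8 {G : Type*} [Group G] [Fintype G] (H : Subgroup G) [H.Normal]
    (hcond : ∀ g : G, g ^ 2 ∈ H → ∃ h ∈ H, (g * h) ^ 2 = 1) :
    ∃ S₀ : Set G, S₀⁻¹ = S₀ ∧ (1 : G) ∉ S₀ ∧
      IsRegularSet (cayley S₀) (H : Set G) 0 1 := by
  classical
  set r := repFun H hcond with hr
  set S₀ : Set G := {g : G | QuotientGroup.mk (s := H) g ≠ 1 ∧
    g = r (QuotientGroup.mk g)} with hS
  have memS : ∀ g : G, g ∈ S₀ ↔ QuotientGroup.mk (s := H) g ≠ 1 ∧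
      g = r (QuotientGroup.mk g) := fun g => Iff.rfl
  have hstep : ∀ g : G, g ∈ S₀ → g⁻¹ ∈ S₀ := by
    intro g hg
    rw [memS] at hg ⊢
    constructor
    · rw [QuotientGroup.mk_inv]
      simpa using hg.1
    · rw [QuotientGroup.mk_inv, hr, repFun_inv, ← hr, ← hg.2]
  have hSnotH : ∀ g ∈ S₀, g ∉ H := by
    intro g hg hgH
    exact ((memS g).mp hg).1 ((QuotientGroup.eq_one_iff g).mpr hgH)
  have hadj : ∀ v w : G, (cayley S₀).Adj v w ↔
      v ≠ w ∧ (w * v⁻¹ ∈ S₀ ∨ v * w⁻¹ ∈ S₀) := by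
    intro v w
    exact SimpleGraph.fromRel_adj _ v w
  refine ⟨S₀, ?_, ?_, ?_, ?_⟩
  · ext g
    rw [Set.mem_inv]
    constructor
    · intro h
      simpa using hstep _ h
    · exact fun h => hstep _ h
  · intro h
    exact ((memS 1).mp h).1 (by simp)
  · intro v hv
    rw [show ((cayley S₀).neighborSet v ∩ (H : Set G)) = ∅ from ?_, Set.ncard_empty]
    ext w
    simp only [Set.mem_inter_iff, Set.mem_empty_iff_false, iff_false, not_and]
    intro hw hwH
    rw [SimpleGraph.mem_neighborSet, hadj] at hw
    rcases hw.2 with h | h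
    · exact hSnotH _ h (H.mul_mem hwH (H.inv_mem hv))
    · exact hSnotH _ h (H.mul_mem hv (H.inv_mem hwH))
  · intro v hv
    have hD : QuotientGroup.mk (s := H) v ≠ 1 :=
      fun h => hv ((QuotientGroup.eq_one_iff v).mp h)
    set D : G ⧸ H := QuotientGroup.mk (s := H) v with hDdef
    set t : G := r D⁻¹ with ht
    have hmkt : QuotientGroup.mk (s := H) t = D⁻¹ := by
      rw [ht, hr]; exact repFun_mk H hcond D⁻¹
    have htS : t ∈ S₀ := by
      rw [memS, hmkt]
      exact ⟨inv_ne_one.mpr hD, by rw [← ht]⟩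
    have hw₀H : t * v ∈ H := by
      rw [← QuotientGroup.eq_one_iff, QuotientGroup.mk_mul, hmkt, ← hDdef,
        inv_mul_cancel]
    rw [show ((cayley S₀).neighborSet v ∩ (H : Set G)) = {t * v} from ?_,
      Set.ncard_singleton]
    ext w
    simp only [Set.mem_inter_iff, SimpleGraph.mem_neighborSet, Set.mem_singleton_iff]
    constructor
    · rintro ⟨haw, hwH⟩
      rw [hadj] at haw
      rcases haw.2 with h | h
      · have hmks : QuotientGroup.mk (s := H) (w * v⁻¹) = D⁻¹ := by
          rw [QuotientGroup.mk_mul, QuotientGroup.mk_inv,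
            (QuotientGroup.eq_one_iff w).mpr hwH, one_mul, hDdef]
        have : w * v⁻¹ = t := by
          rw [((memS _).mp h).2, hmks, ← ht]
        calc w = (w * v⁻¹) * v := by group
          _ = t * v := by rw [this]
      · have hmks : QuotientGroup.mk (s := H) (v * w⁻¹) = D := by
          rw [QuotientGroup.mk_mul, QuotientGroup.mk_inv,
            (QuotientGroup.eq_one_iff w).mpr hwH, inv_one, mul_one, hDdef]
        have hs : v * w⁻¹ = r D := by
          rw [((memS _).mp h).2, hmks]
        have : w = (r D)⁻¹ * v := by
          rw [← hs]; group
        rw [this, ht, hr, ← repFun_inv]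
    · intro hw
      subst hw
      refine ⟨?_, hw₀H⟩
      rw [hadj]
      refine ⟨?_, Or.inl (by rwa [mul_inv_cancel_right])⟩
      intro hcontra
      have : t = 1 := mul_eq_right.mp hcontra.symm
      rw [this] at hmkt
      exact (inv_ne_one.mpr hD) (by rw [← hmkt]; simp)
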